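/- Let L : ℝ^p → ℝ be three times continuously differentiable and (γ,2)-self-concordant, and let θ̂ be a global minimizer of L with ∇L(θ̂) = 0. Then for every θ ∈ ℝ^p, writing R = ‖θ − θ̂‖₂: λ_min(∇²L(θ̂)) · (exp(−γR) + γR − 1) ≤ γ² (L(θ) − L(θ̂)). -/

import Mathlib

open scoped RealInnerProductSpace

/-- The smallest eigenvalue of the Hessian of `L` at `θ`, defined as the infimum of the Hessian
quadratic form `∇²L(θ)[u,u]` over the unit sphere. -/
noncomputable def hessLambdaMin {p : ℕ} (L : EuclideanSpace ℝ (Fin p) → ℝ)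
    (θ : EuclideanSpace ℝ (Fin p)) : ℝ :=
  ⨅ u : Metric.sphere (0 : EuclideanSpace ℝ (Fin p)) 1, iteratedFDeriv ℝ 2 L θ ![u.1, u.1]

private lemma helper_hasDerivAt {p n : ℕ} {L : EuclideanSpace ℝ (Fin p) → ℝ}
    (h : ContDiff ℝ (n+1) L) (c : ℝ → EuclideanSpace ℝ (Fin p))
    (u : EuclideanSpace ℝ (Fin p)) (t : ℝ) (hc : HasDerivAt c u t)
    (m : Fin n → EuclideanSpace ℝ (Fin p)) :
    HasDerivAt (fun t => iteratedFDeriv ℝ n L (c t) m)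
      (iteratedFDeriv ℝ (n+1) L (c t) (Fin.cons u m)) t := by
  have hd : Differentiable ℝ (iteratedFDeriv ℝ n L) :=
    h.differentiable_iteratedFDeriv (by exact_mod_cast Nat.lt_succ_self n)
  have h1 : HasFDerivAt (fun x => iteratedFDeriv ℝ n L x m)
      ((ContinuousMultilinearMap.apply ℝ (fun _ : Fin n => EuclideanSpace ℝ (Fin p)) ℝ m).comp
        (fderiv ℝ (iteratedFDeriv ℝ n L) (c t))) (c t) :=
    (ContinuousMultilinearMap.apply ℝ _ ℝ m).hasFDerivAt.comp _ (hd (c t)).hasFDerivAt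
  exact h1.comp_hasDerivAt t hc

set_option maxHeartbeats 1000000 in
/-- for a `(γ,2)`-self-concordant function with global minimizer `θ̂`,
`λ_min(∇²L(θ̂)) (e^{-γR} + γR - 1) ≤ γ² (L(θ) - L(θ̂))` with `R = ‖θ - θ̂‖`
(the paper's Lemma B4). -/
theorem stmt_11 {p : ℕ} (hp : 1 ≤ p) (γ : ℝ) (hγ : 0 < γ)
    (L : EuclideanSpace ℝ (Fin p) → ℝ) (hC3 : ContDiff ℝ 3 L)
    (hSC : ∀ x u v : EuclideanSpace ℝ (Fin p),
      |iteratedFDeriv ℝ 3 L x ![v, u, u]| ≤ γ * iteratedFDeriv ℝ 2 L x ![u, u] * ‖v‖)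
    (θhat : EuclideanSpace ℝ (Fin p)) (hmin : ∀ θ, L θhat ≤ L θ)
    (hcrit : gradient L θhat = 0)
    (θ : EuclideanSpace ℝ (Fin p)) :
    hessLambdaMin L θhat * (Real.exp (-(γ * ‖θ - θhat‖)) + γ * ‖θ - θhat‖ - 1) ≤
      γ ^ 2 * (L θ - L θhat) := by
  set R := ‖θ - θhat‖ with hR
  rcases eq_or_lt_of_le (norm_nonneg (θ - θhat)) with h0 | hRpos
  · have hR0 : R = 0 := h0.symm
    rw [hR0]
    have : Real.exp (-(γ * 0)) + γ * 0 - 1 = 0 := by simp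
    rw [this, mul_zero]
    have := hmin θ
    nlinarith
  -- Main case: R > 0
  set u : EuclideanSpace ℝ (Fin p) := R⁻¹ • (θ - θhat) with hu_def
  have hu : ‖u‖ = 1 := by
    rw [hu_def, norm_smul, norm_inv, Real.norm_eq_abs, abs_of_pos hRpos, ← hR,
      inv_mul_cancel₀ (ne_of_gt hRpos)]
  set c : ℝ → EuclideanSpace ℝ (Fin p) := fun t => θhat + t • u with hc_def
  have hc : ∀ t, HasDerivAt c u t := by
    intro t
    have : HasDerivAt (fun t : ℝ => t • u) ((1 : ℝ) • u) t := (hasDerivAt_id t).smul_const u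
    simpa [hc_def] using this.const_add θhat
  have hc0 : c 0 = θhat := by simp [hc_def]
  have hcR : c R = θ := by
    rw [hc_def]
    simp only [hu_def, smul_smul, (show R * R⁻¹ = 1 from mul_inv_cancel₀ (ne_of_gt hRpos)), one_smul]
    abel
  set f1 : ℝ → ℝ := fun t => iteratedFDeriv ℝ 1 L (c t) ![u] with hf1_def
  set f2 : ℝ → ℝ := fun t => iteratedFDeriv ℝ 2 L (c t) ![u, u] with hf2_def
  set f3 : ℝ → ℝ := fun t => iteratedFDeriv ℝ 3 L (c t) ![u, u, u] with hf3_def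
  have hd0 : ∀ t, HasDerivAt (fun t => L (c t)) (f1 t) t := by
    intro t
    have := helper_hasDerivAt (n := 0) (hC3.of_le (by norm_num)) c u t (hc t) ![]
    have e1 : (fun t => iteratedFDeriv ℝ 0 L (c t) ![]) = fun t => L (c t) := by
      funext s; rw [iteratedFDeriv_zero_apply]
    have e2 : (Fin.cons u ![] : Fin 1 → EuclideanSpace ℝ (Fin p)) = ![u] := by
      funext i; fin_cases i <;> rfl
    rw [e1, e2] at this
    exact this
  have hd1 : ∀ t, HasDerivAt f1 (f2 t) t := by
    intro t
    have := helper_hasDerivAt (n := 1) (hC3.of_le (by norm_num)) c u t (hc t) ![u]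
    have e2 : (Fin.cons u ![u] : Fin 2 → EuclideanSpace ℝ (Fin p)) = ![u, u] := by
      funext i; fin_cases i <;> rfl
    rw [e2] at this
    exact this
  have hd2 : ∀ t, HasDerivAt f2 (f3 t) t := by
    intro t
    have := helper_hasDerivAt (n := 2) hC3 c u t (hc t) ![u, u]
    have e2 : (Fin.cons u ![u, u] : Fin 3 → EuclideanSpace ℝ (Fin p)) = ![u, u, u] := by
      funext i; fin_cases i <;> rfl
    rw [e2] at this
    exact this
  have hb : ∀ t, |f3 t| ≤ γ * f2 t := by
    intro t
    have := hSC (c t) u u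
    rwa [hu, mul_one] at this
  have hf2nonneg : ∀ t, 0 ≤ f2 t := fun t => by
    have h1 := hb t
    have h2 := abs_nonneg (f3 t)
    nlinarith
  -- Step 1 : f2 t ≥ f2 0 * exp (-γ t) for t ≥ 0
  have step1 : ∀ t, 0 ≤ t → f2 0 * Real.exp (-(γ * t)) ≤ f2 t := by
    intro t ht
    set ψ : ℝ → ℝ := fun t => f2 t * Real.exp (γ * t) with hψ_def
    have hψ : ∀ s, HasDerivAt ψ (f3 s * Real.exp (γ * s) + f2 s * (γ * Real.exp (γ * s))) s := by
      intro s
      have he : HasDerivAt (fun s : ℝ => Real.exp (γ * s)) (γ * Real.exp (γ * s)) s := by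
        have := (Real.hasDerivAt_exp (γ * s)).comp s ((hasDerivAt_id s).const_mul γ)
        exact this.congr_deriv (by simp only [id, mul_one]; ring)
      exact (hd2 s).mul he
    have hmono : Monotone ψ := by
      apply monotone_of_deriv_nonneg (fun s => (hψ s).differentiableAt)
      intro s
      rw [(hψ s).deriv]
      have h1 := hb s
      have h2 := (abs_le.mp h1).1
      have h3 := Real.exp_pos (γ * s)
      nlinarith
    have := hmono ht
    rw [hψ_def] at this
    simp only [mul_zero, Real.exp_zero, mul_one] at this
    calc f2 0 * Real.exp (-(γ * t)) ≤ (f2 t * Real.exp (γ * t)) * Real.exp (-(γ * t)) := by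
          apply mul_le_mul_of_nonneg_right this (Real.exp_nonneg _)
      _ = f2 t := by rw [mul_assoc, ← Real.exp_add]; simp
  have hf10 : f1 0 = 0 := by
    have hfd : fderiv ℝ L θhat = 0 := by
      have : (InnerProductSpace.toDual ℝ (EuclideanSpace ℝ (Fin p))) (gradient L θhat)
          = fderiv ℝ L θhat := by
        rw [gradient]; exact (InnerProductSpace.toDual ℝ _).apply_symm_apply _
      rw [← this, hcrit, map_zero]
    rw [hf1_def]
    simp [hc0, iteratedFDeriv_one_apply, hfd]
  -- Step 2 : f1 t ≥ f2 0 * (1 - exp(-γ t))/γ for t ≥ 0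
  have step2 : ∀ t, 0 ≤ t → f2 0 * ((1 - Real.exp (-(γ * t))) / γ) ≤ f1 t := by
    intro t ht
    set χ : ℝ → ℝ := fun t => f1 t - f2 0 * ((1 - Real.exp (-(γ * t))) / γ) with hχ_def
    have hχ : ∀ s, HasDerivAt χ (f2 s - f2 0 * Real.exp (-(γ * s))) s := by
      intro s
      have he : HasDerivAt (fun s : ℝ => Real.exp (-(γ * s))) (-γ * Real.exp (-(γ * s))) s := by
        have := (Real.hasDerivAt_exp (-(γ * s))).comp s
          (((hasDerivAt_id s).const_mul γ).neg)
        exact this.congr_deriv (by simp only [id, mul_one]; ring)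
      have h2 : HasDerivAt (fun s : ℝ => f2 0 * ((1 - Real.exp (-(γ * s))) / γ))
          (f2 0 * Real.exp (-(γ * s))) s := by
        have := ((he.const_sub 1).div_const γ).const_mul (f2 0)
        refine this.congr_deriv ?_
        rw [neg_mul, neg_neg, mul_div_cancel_left₀ _ (ne_of_gt hγ)]
      exact (hd1 s).sub h2
    have hmono : MonotoneOn χ (Set.Ici 0) := by
      apply monotoneOn_of_deriv_nonneg (convex_Ici 0)
        (fun s _ => ((hχ s).differentiableAt).continuousAt.continuousWithinAt)
        (fun s _ => ((hχ s).differentiableAt).differentiableWithinAt)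
      intro s hs
      rw [(hχ s).deriv]
      rw [interior_Ici] at hs
      have := step1 s (le_of_lt hs)
      linarith
    have hχ0 : χ 0 = 0 := by simp [hχ_def, hf10]
    have := hmono (Set.self_mem_Ici) (Set.mem_Ici.mpr ht) ht
    rw [hχ0] at this
    simp only [hχ_def] at this
    linarith
  -- Step 3 : L θ - L θhat ≥ f2 0 * (γ R + exp(-γ R) - 1)/γ²
  have step3 : f2 0 * ((γ * R + Real.exp (-(γ * R)) - 1) / γ ^ 2) ≤ L θ - L θhat := by
    set ω : ℝ → ℝ := fun t => L (c t) - f2 0 * ((γ * t + Real.exp (-(γ * t)) - 1) / γ ^ 2)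
      with hω_def
    have hω : ∀ s, HasDerivAt ω (f1 s - f2 0 * ((1 - Real.exp (-(γ * s))) / γ)) s := by
      intro s
      have he : HasDerivAt (fun s : ℝ => Real.exp (-(γ * s))) (-γ * Real.exp (-(γ * s))) s := by
        have := (Real.hasDerivAt_exp (-(γ * s))).comp s
          (((hasDerivAt_id s).const_mul γ).neg)
        exact this.congr_deriv (by simp only [id, mul_one]; ring)
      have hlin : HasDerivAt (fun s : ℝ => γ * s + Real.exp (-(γ * s)) - 1)
          (γ + -γ * Real.exp (-(γ * s))) s := by
        simpa using (((hasDerivAt_id s).const_mul γ).add he).sub_const 1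
      have h2 : HasDerivAt (fun s : ℝ => f2 0 * ((γ * s + Real.exp (-(γ * s)) - 1) / γ ^ 2))
          (f2 0 * ((1 - Real.exp (-(γ * s))) / γ)) s := by
        have := (hlin.div_const (γ ^ 2)).const_mul (f2 0)
        refine this.congr_deriv ?_
        rw [show γ + -γ * Real.exp (-(γ * s)) = γ * (1 - Real.exp (-(γ * s))) by ring, pow_two,
          mul_div_mul_left _ _ (ne_of_gt hγ)]
      exact (hd0 s).sub h2
    have hmono : MonotoneOn ω (Set.Ici 0) := by
      apply monotoneOn_of_deriv_nonneg (convex_Ici 0)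
        (fun s _ => ((hω s).differentiableAt).continuousAt.continuousWithinAt)
        (fun s _ => ((hω s).differentiableAt).differentiableWithinAt)
      intro s hs
      rw [(hω s).deriv]
      rw [interior_Ici] at hs
      have := step2 s (le_of_lt hs)
      linarith
    have hω0 : ω 0 = L θhat := by
      simp [hω_def, hc0]
    have hωR : ω R = L θ - f2 0 * ((γ * R + Real.exp (-(γ * R)) - 1) / γ ^ 2) := by
      simp only [hω_def, hcR]
    have := hmono Set.self_mem_Ici (Set.mem_Ici.mpr (le_of_lt hRpos)) (le_of_lt hRpos)
    rw [hω0, hωR] at this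
    linarith
  -- lambda_min <= f2 0
  have hlam : hessLambdaMin L θhat ≤ f2 0 := by
    have hbdd : BddBelow (Set.range fun w : Metric.sphere (0 : EuclideanSpace ℝ (Fin p)) 1 =>
        iteratedFDeriv ℝ 2 L θhat ![w.1, w.1]) := by
      refine ⟨0, ?_⟩
      rintro x ⟨w, rfl⟩
      have h1 := hSC θhat w.1 u
      have h2 := abs_nonneg (iteratedFDeriv ℝ 3 L θhat ![u, w.1, w.1])
      rw [hu, mul_one] at h1
      nlinarith
    have humem : u ∈ Metric.sphere (0 : EuclideanSpace ℝ (Fin p)) 1 := by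
      simp [mem_sphere_iff_norm, hu]
    have hkey : f2 0 = iteratedFDeriv ℝ 2 L θhat ![u, u] := by
      simp only [hf2_def, hc0]
    rw [hessLambdaMin, hkey]
    exact ciInf_le hbdd (⟨u, humem⟩ : Metric.sphere (0 : EuclideanSpace ℝ (Fin p)) 1)
  -- finish
  have hE : 0 ≤ Real.exp (-(γ * R)) + γ * R - 1 := by
    have := Real.add_one_le_exp (-(γ * R))
    linarith
  have h1 : hessLambdaMin L θhat * (Real.exp (-(γ * R)) + γ * R - 1)
      ≤ f2 0 * (Real.exp (-(γ * R)) + γ * R - 1) :=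
    mul_le_mul_of_nonneg_right hlam hE
  have h2 : f2 0 * (Real.exp (-(γ * R)) + γ * R - 1) ≤ γ ^ 2 * (L θ - L θhat) := by
    have hγ2 : (0 : ℝ) < γ ^ 2 := by positivity
    have hmul := mul_le_mul_of_nonneg_left step3 (le_of_lt hγ2)
    have hid : γ ^ 2 * (f2 0 * ((γ * R + Real.exp (-(γ * R)) - 1) / γ ^ 2))
        = f2 0 * (Real.exp (-(γ * R)) + γ * R - 1) := by
      rw [mul_comm (γ ^ 2), mul_assoc, div_mul_cancel₀ _ (ne_of_gt hγ2)]
      ring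
    linarith
  linarith
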